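/- For all integers k ≥ 3 and n ≥ k, min{ (⌈2k/3⌉·⌈n/k⌉ − 1)/n , 1 − (k − ⌈2k/3⌉ + 1)/n } ≤ 19/21. -/
import Mathlib
set_option maxHeartbeats 1000000

lemma stmt_11_aux (k n a m : ℤ) (hk : 3 ≤ k) (hkn : k ≤ n)
    (ha1 : 2*k ≤ 3*a) (ha2 : 3*a ≤ 2*k + 2)
    (hm1 : n ≤ k*m) (hm2 : k*m ≤ n + k - 1) :
    21*(a*m - 1) ≤ 19*n ∨ 2*n ≤ 21*(k - a + 1) := by
  by_cases h2 : 2*n ≤ 21*(k - a + 1)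
  · exact Or.inr h2
  left
  push_neg at h2
  have ha : 3*a = 2*k + k % 3 := by omega
  have hs : k % 3 = 0 ∨ k % 3 = 1 ∨ k % 3 = 2 := by omega
  have hn2 : 2*n ≥ 7*k - 7*(k % 3) + 22 := by omega
  have hn3 : 2*n ≥ 7*k + 8 := by omega
  have hm4 : 4 ≤ m := by nlinarith
  -- goal equivalent to 63*a*m ≤ 57*n + 63
  rcases hs with h | h | h
  · have ha' : 3*a = 2*k := by omega
    nlinarith [mul_nonneg (by linarith : (0:ℤ) ≤ k) (by linarith : (0:ℤ) ≤ m - 4)]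
  · have ha' : 3*a = 2*k + 1 := by omega
    nlinarith [mul_nonneg (by linarith : (0:ℤ) ≤ 15*k - 21) (by linarith : (0:ℤ) ≤ m - 4)]
  · have ha' : 3*a = 2*k + 2 := by omega
    have hk5 : 5 ≤ k := by omega
    rcases le_or_gt 5 m with hm5 | hm5
    · nlinarith [mul_nonneg (by linarith : (0:ℤ) ≤ 15*k - 42) (by linarith : (0:ℤ) ≤ m - 5)]
    · have hm4' : m = 4 := by omega
      subst hm4'
      nlinarith

/-- For all integers `3 ≤ k ≤ n`,
`min{(⌈2k/3⌉·⌈n/k⌉ − 1)/n, 1 − (k − ⌈2k/3⌉ + 1)/n} ≤ 19/21`. -/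
theorem stmt_11 (k n : ℕ) (hk : 3 ≤ k) (hkn : k ≤ n) :
    min (((((⌈(2 * (k : ℚ)) / 3⌉ : ℤ) : ℝ) * ((⌈(n : ℚ) / (k : ℚ)⌉ : ℤ) : ℝ) - 1) / (n : ℝ)))
      (1 - ((k : ℝ) - ((⌈(2 * (k : ℚ)) / 3⌉ : ℤ) : ℝ) + 1) / (n : ℝ)) ≤ 19 / 21 := by
  have hn0 : (0:ℝ) < n := by
    have : 3 ≤ n := le_trans hk hkn
    positivity
  have hk0 : (0:ℚ) < (k:ℚ) := by exact_mod_cast lt_of_lt_of_le (by norm_num) hk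
  set a : ℤ := ⌈(2 * (k : ℚ)) / 3⌉ with hadef
  set m : ℤ := ⌈(n : ℚ) / (k : ℚ)⌉ with hmdef
  have ha1 : 2*(k:ℤ) ≤ 3*a := by
    have h := Int.le_ceil ((2 * (k : ℚ)) / 3)
    rw [div_le_iff₀ (by norm_num : (0:ℚ) < 3)] at h
    have : 2*(k:ℚ) ≤ 3*(a:ℚ) := by rw [hadef]; linarith
    exact_mod_cast this
  have ha2 : 3*a ≤ 2*(k:ℤ) + 2 := by
    have h := Int.ceil_lt_add_one ((2 * (k : ℚ)) / 3)
    rw [← hadef] at h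
    have : 3*(a:ℚ) < 2*(k:ℚ) + 3 := by
      have := (lt_div_iff₀ (by norm_num : (0:ℚ) < 3)).1 (by linarith [h] : (a:ℚ) - 1 < (2*(k:ℚ))/3)
      linarith [this]
    have h3 : 3*a < 2*(k:ℤ) + 3 := by exact_mod_cast this
    omega
  have hm1 : (n:ℤ) ≤ (k:ℤ)*m := by
    have h := Int.le_ceil ((n : ℚ) / (k : ℚ))
    rw [div_le_iff₀ hk0] at h
    have : (n:ℚ) ≤ (k:ℚ)*(m:ℚ) := by rw [hmdef]; linarith
    exact_mod_cast this
  have hm2 : (k:ℤ)*m ≤ (n:ℤ) + (k:ℤ) - 1 := by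
    have h := Int.ceil_lt_add_one ((n : ℚ) / (k : ℚ))
    rw [← hmdef] at h
    have : (k:ℚ)*(m:ℚ) < (n:ℚ) + (k:ℚ) := by
      have := (lt_div_iff₀ hk0).1 (by linarith [h] : (m:ℚ) - 1 < (n:ℚ)/(k:ℚ))
      nlinarith
    have h3 : (k:ℤ)*m < (n:ℤ) + (k:ℤ) := by exact_mod_cast this
    omega
  rcases stmt_11_aux (k:ℤ) (n:ℤ) a m (by exact_mod_cast hk) (by exact_mod_cast hkn)
      ha1 ha2 hm1 hm2 with h | h
  · refine le_trans (min_le_left _ _) ?_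
    rw [div_le_div_iff₀ hn0 (by norm_num : (0:ℝ) < 21)]
    have hcast : (21:ℝ)*((a:ℝ)*(m:ℝ) - 1) ≤ 19*(n:ℝ) := by exact_mod_cast h
    linarith
  · refine le_trans (min_le_right _ _) ?_
    have hcast : 2*(n:ℝ) ≤ 21*((k:ℝ) - (a:ℝ) + 1) := by exact_mod_cast h
    rw [sub_le_iff_le_add]
    have h2 : (2:ℝ)/21 ≤ ((k:ℝ) - (a:ℝ) + 1)/(n:ℝ) := by
      rw [div_le_div_iff₀ (by norm_num : (0:ℝ) < 21) hn0]
      linarith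
    linarith
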